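/- Let u and u_h be admissible functions with ∫_𝒟 |u|² dx = ∫_𝒟 |u_h|² dx = 1, and let λ ∈ ℝ satisfy the eigenvalue relation a_u(u, w) = λ (u, w)_{L²} both for w = u and for w = u_h. Set e := u_h − u. Then the exact identity E(u_h) − E(u) = (1/2)( a_u(e, e) − λ ∫_𝒟 |e|² dx ) + (β/4) ∫_𝒟 (|u_h|² − |u|²)² dx holds. -/

import Mathlib

open MeasureTheory Complex

noncomputable section

abbrev Pt (d : ℕ) := EuclideanSpace ℝ (Fin d)

/-- Admissible functions: C¹ functions with compact support contained in `𝒟`. -/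
def Admissible (d : ℕ) (𝒟 : Set (Pt d)) (w : Pt d → ℂ) : Prop :=
  ContDiff ℝ 1 w ∧ HasCompactSupport w ∧ tsupport w ⊆ 𝒟

/-- The first coordinate `x₁`. -/
def xc1 (d : ℕ) (hd : 2 ≤ d) (x : Pt d) : ℝ := x ⟨0, by omega⟩

/-- The second coordinate `x₂`. -/
def xc2 (d : ℕ) (hd : 2 ≤ d) (x : Pt d) : ℝ := x ⟨1, by omega⟩

/-- The divergence-free vector field `R(x) = (x₂, −x₁)` (resp. `(x₂, −x₁, 0)` if `d = 3`). -/
def Rvec (d : ℕ) (hd : 2 ≤ d) (x : Pt d) (j : Fin d) : ℝ :=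
  if (j : ℕ) = 0 then xc2 d hd x else if (j : ℕ) = 1 then - xc1 d hd x else 0

/-- The `j`-th partial derivative of `w` at `x`. -/
def pd (d : ℕ) (w : Pt d → ℂ) (x : Pt d) (j : Fin d) : ℂ :=
  fderiv ℝ w x (EuclideanSpace.single j (1 : ℝ))

/-- The covariant gradient `∇_R w = ∇w + i (Ω/2) w R`. -/
def covGrad (d : ℕ) (hd : 2 ≤ d) (Ω : ℝ) (w : Pt d → ℂ) (x : Pt d) (j : Fin d) : ℂ :=
  pd d w x j + Complex.I * ((Ω / 2 : ℝ) : ℂ) * w x * ((Rvec d hd x j : ℝ) : ℂ)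

/-- The modified potential `V_R(x) = V(x) − (Ω²/4)(x₁² + x₂²)`. -/
def VR (d : ℕ) (hd : 2 ≤ d) (V : Pt d → ℝ) (Ω : ℝ) (x : Pt d) : ℝ :=
  V x - (Ω ^ 2 / 4) * ((xc1 d hd x) ^ 2 + (xc2 d hd x) ^ 2)

/-- The bilinear form `a_u(v,w) = Re ∫ (∇_R v ⬝ conj ∇_R w + (V_R + β|u|²) v conj w)`. -/
def aForm (d : ℕ) (hd : 2 ≤ d) (𝒟 : Set (Pt d)) (V : Pt d → ℝ) (Ω β : ℝ)
    (u v w : Pt d → ℂ) : ℝ :=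
  (∫ x in 𝒟, ((∑ j : Fin d, covGrad d hd Ω v x j * (starRingEnd ℂ) (covGrad d hd Ω w x j))
      + ((VR d hd V Ω x + β * ‖u x‖ ^ 2 : ℝ) : ℂ) * v x * (starRingEnd ℂ) (w x))).re

/-- The real `L²` inner product `(v,w)_{L²} = Re ∫ v conj w`. -/
def l2ip (d : ℕ) (𝒟 : Set (Pt d)) (v w : Pt d → ℂ) : ℝ :=
  (∫ x in 𝒟, v x * (starRingEnd ℂ) (w x)).re

/-- The angular momentum term `𝓛₃ w = −i (x₁ ∂w/∂x₂ − x₂ ∂w/∂x₁)`. -/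
def L3op (d : ℕ) (hd : 2 ≤ d) (w : Pt d → ℂ) (x : Pt d) : ℂ :=
  - Complex.I * (((xc1 d hd x : ℝ) : ℂ) * pd d w x ⟨1, by omega⟩
      - ((xc2 d hd x : ℝ) : ℂ) * pd d w x ⟨0, by omega⟩)

/-- The Gross–Pitaevskii energy functional. -/
def energy (d : ℕ) (hd : 2 ≤ d) (𝒟 : Set (Pt d)) (V : Pt d → ℝ) (Ω β : ℝ)
    (w : Pt d → ℂ) : ℝ :=
  (1 / 2) * ∫ x in 𝒟, ((∑ j : Fin d, ‖pd d w x j‖ ^ 2) + V x * ‖w x‖ ^ 2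
      - Ω * ((starRingEnd ℂ) (w x) * L3op d hd w x).re + (β / 2) * ‖w x‖ ^ 4)

/-- The squared `H¹`-norm `∫ (|∇w|² + |w|²)`. -/
def h1normSq (d : ℕ) (𝒟 : Set (Pt d)) (w : Pt d → ℂ) : ℝ :=
  ∫ x in 𝒟, ((∑ j : Fin d, ‖pd d w x j‖ ^ 2) + ‖w x‖ ^ 2)

/-- The second Fréchet derivative form
`⟨E''(u)v, w⟩ = a_u(v,w) + 2β Re ∫ Re(u conj v) u conj w`. -/
def Epp (d : ℕ) (hd : 2 ≤ d) (𝒟 : Set (Pt d)) (V : Pt d → ℝ) (Ω β : ℝ)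
    (u v w : Pt d → ℂ) : ℝ :=
  aForm d hd 𝒟 V Ω β u v w
    + 2 * β * (∫ x in 𝒟, (((u x * (starRingEnd ℂ) (v x)).re : ℝ) : ℂ)
        * u x * (starRingEnd ℂ) (w x)).re


section Aux
variable {d : ℕ}

lemma cont_xc1 (hd : 2 ≤ d) : Continuous (xc1 d hd) := by
  unfold xc1; exact (EuclideanSpace.proj (⟨0, by omega⟩ : Fin d)).continuous

lemma cont_xc2 (hd : 2 ≤ d) : Continuous (xc2 d hd) := by
  unfold xc2; exact (EuclideanSpace.proj (⟨1, by omega⟩ : Fin d)).continuous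

lemma cont_Rvec (hd : 2 ≤ d) (j : Fin d) : Continuous (fun x => Rvec d hd x j) := by
  unfold Rvec
  by_cases h1 : (j : ℕ) = 0
  · simpa [h1] using cont_xc2 hd
  · by_cases h2 : (j : ℕ) = 1
    · convert (cont_xc1 hd).neg using 1; funext x; simp [h1, h2]
    · simp only [h1, h2, if_false]; exact continuous_const

lemma cont_pd {w : Pt d → ℂ} (hw : ContDiff ℝ 1 w) (j : Fin d) :
    Continuous (fun x => pd d w x j) := by
  unfold pd
  exact (ContinuousLinearMap.apply ℝ ℂ (EuclideanSpace.single j (1:ℝ))).continuous.comp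
    (hw.continuous_fderiv one_ne_zero)

lemma hcs_pd {w : Pt d → ℂ} (hw : HasCompactSupport w) (j : Fin d) :
    HasCompactSupport (fun x => pd d w x j) :=
  hw.fderiv_apply ℝ (EuclideanSpace.single j (1:ℝ))

lemma cont_cov (hd : 2 ≤ d) (Ω : ℝ) {w : Pt d → ℂ} (hw : ContDiff ℝ 1 w) (j : Fin d) :
    Continuous (fun x => covGrad d hd Ω w x j) := by
  unfold covGrad
  exact (cont_pd hw j).add
    (((continuous_const.mul hw.continuous).mul (Complex.continuous_ofReal.comp (cont_Rvec hd j))))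

lemma hcs_cov (hd : 2 ≤ d) (Ω : ℝ) {w : Pt d → ℂ} (hw : HasCompactSupport w) (j : Fin d) :
    HasCompactSupport (fun x => covGrad d hd Ω w x j) := by
  apply HasCompactSupport.add
  · exact hcs_pd hw j
  · apply hw.mono'
    intro x hx
    simp only [Function.mem_support, ne_eq] at hx
    apply subset_closure
    simp only [Function.mem_support, ne_eq]
    intro h0
    exact hx (by simp [h0])

end Aux

section Int
variable {d : ℕ} {𝒟 : Set (Pt d)} {V : Pt d → ℝ}

lemma cov_zero (hd : 2 ≤ d) (Ω : ℝ) {w : Pt d → ℂ} {x : Pt d} (hx : x ∉ tsupport w)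
    (j : Fin d) : covGrad d hd Ω w x j = 0 := by
  unfold covGrad pd
  rw [fderiv_of_notMem_tsupport _ hx, image_eq_zero_of_notMem_tsupport hx]
  simp

lemma integrableOn_ccs {E : Type*} [NormedAddCommGroup E] {f : Pt d → E} (hf : Continuous f)
    (hcs : HasCompactSupport f) : IntegrableOn f 𝒟 volume :=
  (hf.integrable_of_hasCompactSupport hcs).integrableOn

lemma integrableOn_V_mul (hVmeas : Measurable V) (hVnn : ∀ x, 0 ≤ V x)
    (hVbdd : ∃ C, ∀ x, V x ≤ C) {φ : Pt d → ℂ} (hφ : Continuous φ)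
    (hcs : HasCompactSupport φ) :
    IntegrableOn (fun x => (V x : ℂ) * φ x) 𝒟 volume := by
  obtain ⟨C, hC⟩ := hVbdd
  apply Integrable.mono' (g := fun x => C * ‖φ x‖)
  · apply integrableOn_ccs (continuous_const.mul hφ.norm)
    apply hcs.mono'
    intro x hx
    simp only [Function.mem_support, ne_eq] at hx
    apply subset_closure
    simp only [Function.mem_support, ne_eq]
    intro h0
    exact hx (by simp [h0])
  · exact (((Complex.measurable_ofReal.comp hVmeas).mul hφ.measurable).aestronglyMeasurable).restrict
  · apply Filter.Eventually.of_forall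
    intro x
    rw [norm_mul]
    apply mul_le_mul_of_nonneg_right _ (norm_nonneg _)
    rw [Complex.norm_real, Real.norm_eq_abs, _root_.abs_of_nonneg (hVnn x)]
    exact hC x

lemma integrableOn_main (hd : 2 ≤ d) (Ω : ℝ) (hVmeas : Measurable V) (hVnn : ∀ x, 0 ≤ V x)
    (hVbdd : ∃ C, ∀ x, V x ≤ C)
    {u v w : Pt d → ℂ} (hu1 : Continuous u)
    (hv : ContDiff ℝ 1 v) (hvc : HasCompactSupport v)
    (hw : ContDiff ℝ 1 w) (hwc : HasCompactSupport w) (β : ℝ) :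
    IntegrableOn (fun x =>
      (∑ j : Fin d, covGrad d hd Ω v x j * (starRingEnd ℂ) (covGrad d hd Ω w x j))
      + ((VR d hd V Ω x + β * ‖u x‖ ^ 2 : ℝ) : ℂ) * v x * (starRingEnd ℂ) (w x)) 𝒟 volume := by
  have hvw_cont : Continuous (fun x => v x * (starRingEnd ℂ) (w x)) :=
    hv.continuous.mul hw.continuous.star
  have hvw_cs : HasCompactSupport (fun x => v x * (starRingEnd ℂ) (w x)) := by
    apply hvc.mono'
    intro x hx
    simp only [Function.mem_support, ne_eq] at hx
    apply subset_closure
    simp only [Function.mem_support, ne_eq]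
    intro h0
    exact hx (by simp [h0])
  have h1 : IntegrableOn (fun x =>
      (∑ j : Fin d, covGrad d hd Ω v x j * (starRingEnd ℂ) (covGrad d hd Ω w x j))) 𝒟 volume := by
    apply integrableOn_ccs
    · exact continuous_finset_sum _ fun j _ => (cont_cov hd Ω hv j).mul (cont_cov hd Ω hw j).star
    · apply hvc.mono'
      intro x hx
      simp only [Function.mem_support, ne_eq] at hx
      by_contra hxt
      apply hx
      apply Finset.sum_eq_zero
      intro j _
      rw [cov_zero hd Ω hxt j]
      simp
  have h2a : IntegrableOn (fun x => (V x : ℂ) * (v x * (starRingEnd ℂ) (w x))) 𝒟 volume :=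
    integrableOn_V_mul hVmeas hVnn hVbdd hvw_cont hvw_cs
  have h2b : IntegrableOn (fun x =>
      ((β * ‖u x‖ ^ 2 - (Ω ^ 2 / 4) * ((xc1 d hd x) ^ 2 + (xc2 d hd x) ^ 2) : ℝ) : ℂ)
        * (v x * (starRingEnd ℂ) (w x))) 𝒟 volume := by
    apply integrableOn_ccs
    · apply Continuous.mul _ hvw_cont
      apply Complex.continuous_ofReal.comp
      exact ((continuous_const.mul ((hu1.norm).pow 2)).sub
        (continuous_const.mul (((cont_xc1 hd).pow 2).add ((cont_xc2 hd).pow 2))))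
    · apply hvw_cs.mono'
      intro x hx
      simp only [Function.mem_support, ne_eq] at hx
      apply subset_closure
      simp only [Function.mem_support, ne_eq]
      intro h0
      exact hx (by rw [h0]; ring)
  have heq : (fun x =>
      (∑ j : Fin d, covGrad d hd Ω v x j * (starRingEnd ℂ) (covGrad d hd Ω w x j))
      + ((VR d hd V Ω x + β * ‖u x‖ ^ 2 : ℝ) : ℂ) * v x * (starRingEnd ℂ) (w x))
      = fun x =>
      (∑ j : Fin d, covGrad d hd Ω v x j * (starRingEnd ℂ) (covGrad d hd Ω w x j))
      + ((V x : ℂ) * (v x * (starRingEnd ℂ) (w x))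
        + ((β * ‖u x‖ ^ 2 - (Ω ^ 2 / 4) * ((xc1 d hd x) ^ 2 + (xc2 d hd x) ^ 2) : ℝ) : ℂ)
          * (v x * (starRingEnd ℂ) (w x))) := by
    funext x
    simp only [VR]
    push_cast
    ring
  rw [heq]
  exact h1.add (h2a.add h2b)

end Int

section Point
variable {d : ℕ}

lemma mul_conj_self (z : ℂ) : z * (starRingEnd ℂ) z = ((‖z‖ ^ 2 : ℝ) : ℂ) := by
  rw [Complex.mul_conj, Complex.sq_norm]

lemma sum_two (hd : 2 ≤ d) (f : Fin d → ℂ)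
    (h : ∀ j : Fin d, (j : ℕ) ≠ 0 → (j : ℕ) ≠ 1 → f j = 0) :
    ∑ j, f j = f ⟨0, by omega⟩ + f ⟨1, by omega⟩ := by
  have hne : (⟨0, by omega⟩ : Fin d) ≠ ⟨1, by omega⟩ := by simp [Fin.ext_iff]
  have hsub : ({⟨0, by omega⟩, ⟨1, by omega⟩} : Finset (Fin d)) ⊆ Finset.univ :=
    Finset.subset_univ _
  rw [← Finset.sum_subset hsub, Finset.sum_pair hne]
  intro j _ hj
  simp only [Finset.mem_insert, Finset.mem_singleton] at hj
  push_neg at hj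
  exact h j (fun h0 => hj.1 (Fin.ext h0)) (fun h1 => hj.2 (Fin.ext h1))

lemma cov_identity (hd : 2 ≤ d) (Ω : ℝ) (V : Pt d → ℝ) (t : ℝ) (w : Pt d → ℂ) (x : Pt d) :
    ((∑ j : Fin d, covGrad d hd Ω w x j * (starRingEnd ℂ) (covGrad d hd Ω w x j))
      + ((VR d hd V Ω x + t : ℝ) : ℂ) * w x * (starRingEnd ℂ) (w x)).re
    = (∑ j : Fin d, ‖pd d w x j‖ ^ 2) + V x * ‖w x‖ ^ 2
      - Ω * ((starRingEnd ℂ) (w x) * L3op d hd w x).re + t * ‖w x‖ ^ 2 := by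
  set j0 : Fin d := ⟨0, by omega⟩ with hj0
  set j1 : Fin d := ⟨1, by omega⟩ with hj1
  set a := w x with ha
  set D : Fin d → ℂ := fun j =>
    Complex.I * ((Ω / 2 : ℝ) : ℂ) * ((Rvec d hd x j : ℝ) : ℂ) *
        (a * (starRingEnd ℂ) (pd d w x j) - (starRingEnd ℂ) a * pd d w x j)
      - ((Ω / 2 : ℝ) : ℂ) ^ 2 * ((Rvec d hd x j : ℝ) : ℂ) ^ 2 * Complex.I ^ 2
          * a * (starRingEnd ℂ) a with hD
  have expand : ∀ j : Fin d,
      covGrad d hd Ω w x j * (starRingEnd ℂ) (covGrad d hd Ω w x j)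
        = ((‖pd d w x j‖ ^ 2 : ℝ) : ℂ) + D j := by
    intro j
    simp only [hD]
    unfold covGrad
    rw [← mul_conj_self (pd d w x j)]
    simp only [map_add, map_mul, Complex.conj_I, Complex.conj_ofReal, ← ha]
    ring
  have hsum : (∑ j : Fin d, covGrad d hd Ω w x j * (starRingEnd ℂ) (covGrad d hd Ω w x j))
      = (∑ j : Fin d, ((‖pd d w x j‖ ^ 2 : ℝ) : ℂ)) + (D j0 + D j1) := by
    rw [Finset.sum_congr rfl (fun j _ => expand j), Finset.sum_add_distrib]
    congr 1
    apply sum_two hd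
    intro j hj0' hj1'
    have hR : Rvec d hd x j = 0 := by simp [Rvec, hj0', hj1']
    simp [hD, hR]
  have hR0 : Rvec d hd x j0 = xc2 d hd x := by simp [Rvec, hj0]
  have hR1 : Rvec d hd x j1 = - xc1 d hd x := by simp [Rvec, hj1]
  have hpd1 : pd d w x ⟨1, by omega⟩ = pd d w x j1 := rfl
  have hpd0 : pd d w x ⟨0, by omega⟩ = pd d w x j0 := rfl
  rw [hsum]
  unfold L3op VR
  rw [hpd0, hpd1]
  set z0 := pd d w x j0
  set z1 := pd d w x j1
  have hnorm : (∑ j : Fin d, ((‖pd d w x j‖ ^ 2 : ℝ) : ℂ))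
      = (((∑ j : Fin d, ‖pd d w x j‖ ^ 2 : ℝ)) : ℂ) := by push_cast; rfl
  have hna : ‖a‖ ^ 2 = a.re * a.re + a.im * a.im := by
    rw [Complex.sq_norm, Complex.normSq_apply]
  have hsq : (((Ω / 2 : ℝ)) : ℂ) ^ 2 = ((Ω ^ 2 / 4 : ℝ) : ℂ) := by push_cast; ring
  simp only [hnorm, hD, hR0, hR1, Complex.I_sq, hsq]
  rw [hna]
  simp [Complex.add_re, Complex.sub_re, Complex.mul_re, Complex.mul_im, Complex.add_im,
    Complex.sub_im, Complex.conj_re, Complex.conj_im, ← Complex.ofReal_pow]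
  ring

end Point

section Lin
variable {d : ℕ}

lemma norm_sq_re (v : ℂ) : ‖v‖ ^ 2 = v.re * v.re + v.im * v.im := by
  rw [Complex.sq_norm, Complex.normSq_apply]

lemma pd_sub {u uh : Pt d → ℂ} (hu : ContDiff ℝ 1 u) (huh : ContDiff ℝ 1 uh)
    (x : Pt d) (j : Fin d) :
    pd d (fun y => uh y - u y) x j = pd d uh x j - pd d u x j := by
  unfold pd
  rw [fderiv_fun_sub (huh.differentiable one_ne_zero x) (hu.differentiable one_ne_zero x)]
  simp

lemma cov_sub (hd : 2 ≤ d) (Ω : ℝ) {u uh : Pt d → ℂ} (hu : ContDiff ℝ 1 u)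
    (huh : ContDiff ℝ 1 uh) (x : Pt d) (j : Fin d) :
    covGrad d hd Ω (fun y => uh y - u y) x j
      = covGrad d hd Ω uh x j - covGrad d hd Ω u x j := by
  unfold covGrad
  rw [pd_sub hu huh]
  ring

lemma sum_mul_conj_sub (A B : Fin d → ℂ) :
    ∑ j, (A j - B j) * (starRingEnd ℂ) (A j - B j)
      = (∑ j, A j * (starRingEnd ℂ) (A j) + ∑ j, B j * (starRingEnd ℂ) (B j))
        - (∑ j, B j * (starRingEnd ℂ) (A j) + ∑ j, A j * (starRingEnd ℂ) (B j)) := by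
  rw [← Finset.sum_add_distrib, ← Finset.sum_add_distrib, ← Finset.sum_sub_distrib]
  apply Finset.sum_congr rfl
  intro j _
  simp only [map_sub]
  ring

lemma G_sub (hd : 2 ≤ d) (Ω β : ℝ) (V : Pt d → ℝ) {u uh : Pt d → ℂ}
    (hu : ContDiff ℝ 1 u) (huh : ContDiff ℝ 1 uh) (x : Pt d) :
    (∑ j : Fin d, covGrad d hd Ω (fun y => uh y - u y) x j
        * (starRingEnd ℂ) (covGrad d hd Ω (fun y => uh y - u y) x j))
      + ((VR d hd V Ω x + β * ‖u x‖ ^ 2 : ℝ) : ℂ) * (uh x - u x) * (starRingEnd ℂ) (uh x - u x)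
    = (((∑ j : Fin d, covGrad d hd Ω uh x j * (starRingEnd ℂ) (covGrad d hd Ω uh x j))
        + ((VR d hd V Ω x + β * ‖u x‖ ^ 2 : ℝ) : ℂ) * uh x * (starRingEnd ℂ) (uh x))
      + ((∑ j : Fin d, covGrad d hd Ω u x j * (starRingEnd ℂ) (covGrad d hd Ω u x j))
        + ((VR d hd V Ω x + β * ‖u x‖ ^ 2 : ℝ) : ℂ) * u x * (starRingEnd ℂ) (u x)))
      - (((∑ j : Fin d, covGrad d hd Ω u x j * (starRingEnd ℂ) (covGrad d hd Ω uh x j))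
        + ((VR d hd V Ω x + β * ‖u x‖ ^ 2 : ℝ) : ℂ) * u x * (starRingEnd ℂ) (uh x))
      + ((∑ j : Fin d, covGrad d hd Ω uh x j * (starRingEnd ℂ) (covGrad d hd Ω u x j))
        + ((VR d hd V Ω x + β * ‖u x‖ ^ 2 : ℝ) : ℂ) * uh x * (starRingEnd ℂ) (u x))) := by
  simp only [cov_sub hd Ω hu huh]
  rw [sum_mul_conj_sub]
  simp only [map_sub]
  ring

lemma G_conj_sym (hd : 2 ≤ d) (Ω β : ℝ) (V : Pt d → ℝ) (u v w : Pt d → ℂ) (x : Pt d) :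
    (∑ j : Fin d, covGrad d hd Ω w x j * (starRingEnd ℂ) (covGrad d hd Ω v x j))
      + ((VR d hd V Ω x + β * ‖u x‖ ^ 2 : ℝ) : ℂ) * w x * (starRingEnd ℂ) (v x)
    = (starRingEnd ℂ)
        ((∑ j : Fin d, covGrad d hd Ω v x j * (starRingEnd ℂ) (covGrad d hd Ω w x j))
          + ((VR d hd V Ω x + β * ‖u x‖ ^ 2 : ℝ) : ℂ) * v x * (starRingEnd ℂ) (w x)) := by
  simp only [map_add, map_sum, map_mul, Complex.conj_conj, Complex.conj_ofReal]
  congr 1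
  · exact Finset.sum_congr rfl fun j _ => mul_comm _ _
  · ring

end Lin

section GG
variable {d : ℕ}

def Gfun (d : ℕ) (hd : 2 ≤ d) (V : Pt d → ℝ) (Ω β : ℝ) (u v w : Pt d → ℂ) (x : Pt d) : ℂ :=
  (∑ j : Fin d, covGrad d hd Ω v x j * (starRingEnd ℂ) (covGrad d hd Ω w x j))
    + ((VR d hd V Ω x + β * ‖u x‖ ^ 2 : ℝ) : ℂ) * v x * (starRingEnd ℂ) (w x)

lemma aForm_eq (hd : 2 ≤ d) (𝒟 : Set (Pt d)) (V : Pt d → ℝ) (Ω β : ℝ) (u v w : Pt d → ℂ) :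
    aForm d hd 𝒟 V Ω β u v w = (∫ x in 𝒟, Gfun d hd V Ω β u v w x).re := rfl

lemma Gfun_integrable (hd : 2 ≤ d) {𝒟 : Set (Pt d)} {V : Pt d → ℝ} (Ω β : ℝ)
    (hVmeas : Measurable V) (hVnn : ∀ x, 0 ≤ V x) (hVbdd : ∃ C, ∀ x, V x ≤ C)
    {u v w : Pt d → ℂ} (hcu : Continuous u)
    (hv : ContDiff ℝ 1 v) (hvc : HasCompactSupport v)
    (hw : ContDiff ℝ 1 w) (hwc : HasCompactSupport w) :
    IntegrableOn (Gfun d hd V Ω β u v w) 𝒟 volume := by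
  unfold Gfun
  exact integrableOn_main hd Ω hVmeas hVnn hVbdd hcu hv hvc hw hwc β

lemma Gfun_re (hd : 2 ≤ d) (V : Pt d → ℝ) (Ω β : ℝ) (u w : Pt d → ℂ) (x : Pt d) :
    (Gfun d hd V Ω β u w w x).re
      = (∑ j : Fin d, ‖pd d w x j‖ ^ 2) + V x * ‖w x‖ ^ 2
        - Ω * ((starRingEnd ℂ) (w x) * L3op d hd w x).re + β * ‖u x‖ ^ 2 * ‖w x‖ ^ 2 := by
  have h := cov_identity hd Ω V (β * ‖u x‖ ^ 2) w x
  unfold Gfun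
  rw [h]

lemma Gfun_sub (hd : 2 ≤ d) (V : Pt d → ℝ) (Ω β : ℝ) {u uh : Pt d → ℂ}
    (hu : ContDiff ℝ 1 u) (huh : ContDiff ℝ 1 uh) (x : Pt d) :
    Gfun d hd V Ω β u (fun y => uh y - u y) (fun y => uh y - u y) x
      = (Gfun d hd V Ω β u uh uh x + Gfun d hd V Ω β u u u x)
        - (Gfun d hd V Ω β u u uh x + Gfun d hd V Ω β u uh u x) := by
  unfold Gfun
  exact G_sub hd Ω β V hu huh x

lemma Gfun_conj (hd : 2 ≤ d) (V : Pt d → ℝ) (Ω β : ℝ) (u v w : Pt d → ℂ) (x : Pt d) :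
    Gfun d hd V Ω β u w v x = (starRingEnd ℂ) (Gfun d hd V Ω β u v w x) := by
  unfold Gfun
  exact G_conj_sym hd Ω β V u v w x

lemma hcs_dom {E F : Type*} [Zero E] [Zero F] {f : Pt d → E} (hf : HasCompactSupport f)
    {g : Pt d → F} (h : ∀ x, f x = 0 → g x = 0) : HasCompactSupport g := by
  apply hf.mono'
  intro x hx
  simp only [Function.mem_support, ne_eq] at hx
  apply subset_closure
  simp only [Function.mem_support, ne_eq]
  intro h0
  exact hx (h x h0)

lemma integral_creal {𝒟 : Set (Pt d)} {f : Pt d → ℂ} (hf : IntegrableOn f 𝒟 volume) :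
    ∫ x in 𝒟, (f x).re = (∫ x in 𝒟, f x).re := by
  have h := integral_re (μ := volume.restrict 𝒟) hf
  simpa using h

lemma integrableOn_creal {𝒟 : Set (Pt d)} {f : Pt d → ℂ} (hf : IntegrableOn f 𝒟 volume) :
    IntegrableOn (fun x => (f x).re) 𝒟 volume := by
  have h := hf.re
  simpa [IntegrableOn] using h

lemma energy_eq (hd : 2 ≤ d) (𝒟 : Set (Pt d)) {V : Pt d → ℝ} (Ω β : ℝ)
    (hVmeas : Measurable V) (hVnn : ∀ x, 0 ≤ V x) (hVbdd : ∃ C, ∀ x, V x ≤ C)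
    {u w : Pt d → ℂ} (hcu : Continuous u)
    (hw : ContDiff ℝ 1 w) (hwc : HasCompactSupport w) :
    energy d hd 𝒟 V Ω β w
      = (1/2) * ((∫ x in 𝒟, Gfun d hd V Ω β u w w x).re
          - β * (∫ x in 𝒟, ‖u x‖ ^ 2 * ‖w x‖ ^ 2)
          + (β/2) * (∫ x in 𝒟, ‖w x‖ ^ 4)) := by
  have IG : IntegrableOn (Gfun d hd V Ω β u w w) 𝒟 volume :=
    Gfun_integrable hd Ω β hVmeas hVnn hVbdd hcu hw hwc hw hwc
  have I1 : IntegrableOn (fun x => (Gfun d hd V Ω β u w w x).re) 𝒟 volume :=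
    integrableOn_creal IG
  have I2 : IntegrableOn (fun x => ‖u x‖ ^ 2 * ‖w x‖ ^ 2) 𝒟 volume := by
    apply integrableOn_ccs ((hcu.norm.pow 2).mul (hw.continuous.norm.pow 2))
    exact hcs_dom hwc fun x h0 => by simp [h0]
  have I3 : IntegrableOn (fun x => ‖w x‖ ^ 4) 𝒟 volume := by
    apply integrableOn_ccs (hw.continuous.norm.pow 4)
    exact hcs_dom hwc fun x h0 => by simp [h0]
  have hptw : ∀ x : Pt d, (∑ j : Fin d, ‖pd d w x j‖ ^ 2) + V x * ‖w x‖ ^ 2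
      - Ω * ((starRingEnd ℂ) (w x) * L3op d hd w x).re + β / 2 * ‖w x‖ ^ 4
      = (Gfun d hd V Ω β u w w x).re - β * (‖u x‖ ^ 2 * ‖w x‖ ^ 2) + (β/2) * ‖w x‖ ^ 4 := by
    intro x
    rw [Gfun_re hd V Ω β u w x]
    ring
  unfold energy
  rw [integral_congr_ae (Filter.Eventually.of_forall hptw)]
  have I2b : IntegrableOn (fun x => β * (‖u x‖ ^ 2 * ‖w x‖ ^ 2)) 𝒟 volume := I2.const_mul β
  have I12 : IntegrableOn (fun x => (Gfun d hd V Ω β u w w x).re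
      - β * (‖u x‖ ^ 2 * ‖w x‖ ^ 2)) 𝒟 volume := I1.sub I2b
  have I3b : IntegrableOn (fun x => (β/2) * ‖w x‖ ^ 4) 𝒟 volume := I3.const_mul (β/2)
  rw [integral_add I12 I3b, integral_sub I1 I2b, integral_const_mul, integral_const_mul,
    integral_creal IG]

end GG

/-- **exact energy-difference identity, proof of Lemma 5.3.** For normalized
admissible `u, u_h` and `λ` satisfying the eigenvalue relation `a_u(u,w) = λ(u,w)_{L²}` for
`w = u` and `w = u_h`, setting `e := u_h − u` one has
`E(u_h) − E(u) = (1/2)(a_u(e,e) − λ∫|e|²) + (β/4)∫(|u_h|² − |u|²)²`. -/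
theorem stmt4 (d : ℕ) (hd23 : d = 2 ∨ d = 3) (hd : 2 ≤ d)
    (𝒟 : Set (Pt d)) (h𝒟open : IsOpen 𝒟) (h𝒟bdd : Bornology.IsBounded 𝒟)
    (V : Pt d → ℝ) (hVmeas : Measurable V) (hVbdd : ∃ C : ℝ, ∀ x, V x ≤ C)
    (hVnonneg : ∀ x, 0 ≤ V x)
    (β Ω : ℝ) (hβ : 0 ≤ β)
    (u uh : Pt d → ℂ) (hu : Admissible d 𝒟 u) (huh : Admissible d 𝒟 uh)
    (hunorm : ∫ x in 𝒟, ‖u x‖ ^ 2 = 1) (huhnorm : ∫ x in 𝒟, ‖uh x‖ ^ 2 = 1)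
    (lam : ℝ)
    (heig_u : aForm d hd 𝒟 V Ω β u u u = lam * l2ip d 𝒟 u u)
    (heig_uh : aForm d hd 𝒟 V Ω β u u uh = lam * l2ip d 𝒟 u uh) :
    energy d hd 𝒟 V Ω β uh - energy d hd 𝒟 V Ω β u
      = (1 / 2) * (aForm d hd 𝒟 V Ω β u (fun x => uh x - u x) (fun x => uh x - u x)
            - lam * ∫ x in 𝒟, ‖uh x - u x‖ ^ 2)
        + (β / 4) * ∫ x in 𝒟, (‖uh x‖ ^ 2 - ‖u x‖ ^ 2) ^ 2 := by
  obtain ⟨hu1, hu2, -⟩ := hu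
  obtain ⟨huh1, huh2, -⟩ := huh
  have hcu := hu1.continuous
  have hcuh := huh1.continuous
  have Iuu := Gfun_integrable (𝒟 := 𝒟) hd Ω β hVmeas hVnonneg hVbdd hcu hu1 hu2 hu1 hu2
  have Iuuh := Gfun_integrable (𝒟 := 𝒟) hd Ω β hVmeas hVnonneg hVbdd hcu hu1 hu2 huh1 huh2
  have Iuhu := Gfun_integrable (𝒟 := 𝒟) hd Ω β hVmeas hVnonneg hVbdd hcu huh1 huh2 hu1 hu2
  have Iuhuh := Gfun_integrable (𝒟 := 𝒟) hd Ω β hVmeas hVnonneg hVbdd hcu huh1 huh2 huh1 huh2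
  have hconj : ∫ x in 𝒟, Gfun d hd V Ω β u uh u x
      = (starRingEnd ℂ) (∫ x in 𝒟, Gfun d hd V Ω β u u uh x) := by
    rw [← integral_conj]
    exact integral_congr_ae (Filter.Eventually.of_forall fun x => Gfun_conj hd V Ω β u u uh x)
  have haee : aForm d hd 𝒟 V Ω β u (fun x => uh x - u x) (fun x => uh x - u x)
      = (∫ x in 𝒟, Gfun d hd V Ω β u uh uh x).re + (∫ x in 𝒟, Gfun d hd V Ω β u u u x).re
        - 2 * (∫ x in 𝒟, Gfun d hd V Ω β u u uh x).re := by
    rw [aForm_eq]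
    have IS1 : IntegrableOn (fun x => Gfun d hd V Ω β u uh uh x + Gfun d hd V Ω β u u u x)
        𝒟 volume := Iuhuh.add Iuu
    have IS2 : IntegrableOn (fun x => Gfun d hd V Ω β u u uh x + Gfun d hd V Ω β u uh u x)
        𝒟 volume := Iuuh.add Iuhu
    have h1 : ∫ x in 𝒟, Gfun d hd V Ω β u (fun y => uh y - u y) (fun y => uh y - u y) x
        = ((∫ x in 𝒟, Gfun d hd V Ω β u uh uh x) + ∫ x in 𝒟, Gfun d hd V Ω β u u u x)
          - ((∫ x in 𝒟, Gfun d hd V Ω β u u uh x) + ∫ x in 𝒟, Gfun d hd V Ω β u uh u x) := by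
      rw [integral_congr_ae (Filter.Eventually.of_forall (Gfun_sub hd V Ω β hu1 huh1))]
      rw [integral_sub IS1 IS2, integral_add Iuhuh Iuu, integral_add Iuuh Iuhu]
    rw [h1, hconj]
    simp only [Complex.sub_re, Complex.add_re, Complex.conj_re]
    ring
  have Iuconjuh : IntegrableOn (fun x => u x * (starRingEnd ℂ) (uh x)) 𝒟 volume := by
    apply integrableOn_ccs (hcu.mul hcuh.star)
    exact hcs_dom hu2 fun x h0 => by simp [h0]
  have hl2uh : l2ip d 𝒟 u uh = ∫ x in 𝒟, (u x * (starRingEnd ℂ) (uh x)).re :=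
    (integral_creal Iuconjuh).symm
  have hl2uu : l2ip d 𝒟 u u = 1 := by
    unfold l2ip
    have Icu : IntegrableOn (fun x => ((‖u x‖ ^ 2 : ℝ) : ℂ)) 𝒟 volume := by
      apply integrableOn_ccs (Complex.continuous_ofReal.comp (hcu.norm.pow 2))
      exact hcs_dom hu2 fun x h0 => by simp [h0]
    rw [integral_congr_ae (Filter.Eventually.of_forall fun x => mul_conj_self (u x)),
      ← integral_creal Icu]
    simp only [Complex.ofReal_re]
    exact hunorm
  have Inu : IntegrableOn (fun x => ‖u x‖ ^ 2) 𝒟 volume := by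
    apply integrableOn_ccs (hcu.norm.pow 2)
    exact hcs_dom hu2 fun x h0 => by simp [h0]
  have Inuh : IntegrableOn (fun x => ‖uh x‖ ^ 2) 𝒟 volume := by
    apply integrableOn_ccs (hcuh.norm.pow 2)
    exact hcs_dom huh2 fun x h0 => by simp [h0]
  have Ire : IntegrableOn (fun x => (u x * (starRingEnd ℂ) (uh x)).re) 𝒟 volume :=
    integrableOn_creal Iuconjuh
  have hee : (∫ x in 𝒟, ‖uh x - u x‖ ^ 2) = 2 - 2 * l2ip d 𝒟 u uh := by
    have hptw : ∀ x : Pt d, ‖uh x - u x‖ ^ 2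
        = ‖uh x‖ ^ 2 + ‖u x‖ ^ 2 - 2 * (u x * (starRingEnd ℂ) (uh x)).re := by
      intro x
      simp only [norm_sq_re, Complex.sub_re, Complex.sub_im, Complex.mul_re, Complex.mul_im,
        Complex.conj_re, Complex.conj_im]
      ring
    rw [integral_congr_ae (Filter.Eventually.of_forall hptw)]
    have IA : IntegrableOn (fun x => ‖uh x‖ ^ 2 + ‖u x‖ ^ 2) 𝒟 volume := Inuh.add Inu
    have IB : IntegrableOn (fun x => 2 * (u x * (starRingEnd ℂ) (uh x)).re) 𝒟 volume :=
      Ire.const_mul 2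
    rw [integral_sub IA IB, integral_add Inuh Inu, integral_const_mul, huhnorm, hunorm, hl2uh]
    ring
  have In4u : IntegrableOn (fun x => ‖u x‖ ^ 4) 𝒟 volume := by
    apply integrableOn_ccs (hcu.norm.pow 4)
    exact hcs_dom hu2 fun x h0 => by simp [h0]
  have In4uh : IntegrableOn (fun x => ‖uh x‖ ^ 4) 𝒟 volume := by
    apply integrableOn_ccs (hcuh.norm.pow 4)
    exact hcs_dom huh2 fun x h0 => by simp [h0]
  have In2 : IntegrableOn (fun x => ‖u x‖ ^ 2 * ‖uh x‖ ^ 2) 𝒟 volume := by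
    apply integrableOn_ccs ((hcu.norm.pow 2).mul (hcuh.norm.pow 2))
    exact hcs_dom hu2 fun x h0 => by simp [h0]
  have hquart : (∫ x in 𝒟, (‖uh x‖ ^ 2 - ‖u x‖ ^ 2) ^ 2)
      = (∫ x in 𝒟, ‖uh x‖ ^ 4) - 2 * (∫ x in 𝒟, ‖u x‖ ^ 2 * ‖uh x‖ ^ 2)
        + ∫ x in 𝒟, ‖u x‖ ^ 4 := by
    have hptw : ∀ x : Pt d, (‖uh x‖ ^ 2 - ‖u x‖ ^ 2) ^ 2
        = ‖uh x‖ ^ 4 - 2 * (‖u x‖ ^ 2 * ‖uh x‖ ^ 2) + ‖u x‖ ^ 4 := fun x => by ring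
    rw [integral_congr_ae (Filter.Eventually.of_forall hptw)]
    have I2c : IntegrableOn (fun x => 2 * (‖u x‖ ^ 2 * ‖uh x‖ ^ 2)) 𝒟 volume := In2.const_mul 2
    have IA : IntegrableOn (fun x => ‖uh x‖ ^ 4 - 2 * (‖u x‖ ^ 2 * ‖uh x‖ ^ 2)) 𝒟 volume :=
      In4uh.sub I2c
    rw [integral_add IA In4u, integral_sub In4uh I2c, integral_const_mul]
  have hBuu : (∫ x in 𝒟, ‖u x‖ ^ 2 * ‖u x‖ ^ 2) = ∫ x in 𝒟, ‖u x‖ ^ 4 :=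
    integral_congr_ae (Filter.Eventually.of_forall fun x => by ring)
  have hA3 : (∫ x in 𝒟, Gfun d hd V Ω β u u u x).re = lam := by
    have h := heig_u
    rw [aForm_eq, hl2uu] at h
    simpa using h
  have hA2 : (∫ x in 𝒟, Gfun d hd V Ω β u u uh x).re = lam * l2ip d 𝒟 u uh := by
    have h := heig_uh
    rw [aForm_eq] at h
    exact h
  rw [energy_eq hd 𝒟 Ω β hVmeas hVnonneg hVbdd hcu huh1 huh2,
      energy_eq hd 𝒟 Ω β hVmeas hVnonneg hVbdd hcu hu1 hu2,
      haee, hee, hquart, hBuu, hA3, hA2]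
  ring
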